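/- There exists a subnatural encoding which is not uniform: for the functor FX = X × X × X with label set A = 3 + 3, the encoding ♭_X(x,y,z) = {(inl 0, x), (inl 1, y), (inl 2, z)} if y = z and {(inr 0, x), (inr 1, y), (inr 2, z)} if y ≠ z, is subnatural (the naturality square commutes for all injective maps), but fails the uniformity condition: there exist a set X, t ∈ FX, and x ∈ X with fil_{{1}}(♭_2(Fχ_{{x}}(t))) ≠ fil_{{x}}(♭_X(t)). -/

import Mathlib

open scoped Classical

/-- Filter map `fil_S : B(A × X) → B(A)`, `fil_S(f)(a) = Σ_{x ∈ S} f(a,x)`. -/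
noncomputable def fil {A X : Type} (S : Set X) (f : (A × X) →₀ ℕ) : A →₀ ℕ :=
  f.sum fun p n => if p.2 ∈ S then Finsupp.single p.1 n else 0

/-- Characteristic function `χ_S : X → 2`, where `2 = Bool` with `true = 1`. -/
noncomputable def chi {X : Type} (S : Set X) : X → Bool :=
  fun x => if x ∈ S then true else false

/-- `group = curry ∘ B(swap) : B(A × X) → (B A)^(X)`. -/
noncomputable def bagGroup {A X : Type} (f : (A × X) →₀ ℕ) : X →₀ (A →₀ ℕ) :=
  Finsupp.finsuppProdEquiv (Finsupp.mapDomain Prod.swap f)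

/-- `ungroup = B(swap) ∘ uncurry : (B A)^(X) → B(A × X)`. -/
noncomputable def bagUngroup {A X : Type} (g : X →₀ (A →₀ ℕ)) : (A × X) →₀ ℕ :=
  Finsupp.mapDomain Prod.swap (Finsupp.finsuppProdEquiv.symm g)

/-- The functor `FX = X × X × X` on maps. -/
def Tmap {X Y : Type} (f : X → Y) (t : X × X × X) : Y × Y × Y :=
  (f t.1, f t.2.1, f t.2.2)

/-- The encoding of `FX = X × X × X` with labels `A = 3 + 3`. -/
noncomputable def flatT (X : Type) (t : X × X × X) : ((Fin 3 ⊕ Fin 3) × X) →₀ ℕ :=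
  if t.2.1 = t.2.2 then
    Finsupp.single (Sum.inl 0, t.1) 1 + Finsupp.single (Sum.inl 1, t.2.1) 1 +
      Finsupp.single (Sum.inl 2, t.2.2) 1
  else
    Finsupp.single (Sum.inr 0, t.1) 1 + Finsupp.single (Sum.inr 1, t.2.1) 1 +
      Finsupp.single (Sum.inr 2, t.2.2) 1

/-- `flatT` is a subnatural encoding which is not uniform. -/
theorem subnatural_not_uniform :
    (∀ (X Y : Type) (m : X → Y), Function.Injective m → ∀ t : X × X × X,
      Finsupp.mapDomain (Prod.map id m) (flatT X t) = flatT Y (Tmap m t)) ∧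
    (∃ (X : Type) (t : X × X × X) (x : X),
      fil {true} (flatT Bool (Tmap (chi {x}) t)) ≠ fil {x} (flatT X t)) := by
  constructor
  · intro X Y m hm t
    simp only [flatT, Tmap]
    by_cases h : t.2.1 = t.2.2
    · rw [if_pos h]; simp only [h, ↓reduceIte]
      simp [Finsupp.mapDomain_add, Finsupp.mapDomain_single, Prod.map]
    · rw [if_neg h]; simp only [hm.eq_iff, h, ↓reduceIte]
      simp [Finsupp.mapDomain_add, Finsupp.mapDomain_single, Prod.map]
  · refine ⟨Fin 3, (0, 1, 2), 0, ?_⟩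
    intro he
    have := DFunLike.congr_fun he (Sum.inl 0)
    simp only [flatT, Tmap, chi] at this
    simp only [Set.mem_singleton_iff, show ((1:Fin 3)=0) = False from by decide,
      show ((2:Fin 3)=0) = False from by decide, show ((1:Fin 3)=2) = False from by decide,
      show ((0:Fin 3)=0) = True from by decide, if_true, if_false] at this
    norm_num [fil, Finsupp.sum_add_index', Finsupp.sum_single_index,
      Finsupp.single_apply] at this
    simp only [apply_ite (fun g : (Fin 3 ⊕ Fin 3) →₀ ℕ => g (Sum.inl 0)),
      Finsupp.single_apply] at this
    rw [Finsupp.sum_add_index' (by simp)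
        (by intro a b c; by_cases h1 : a.2 = 0 <;> by_cases h2 : a.1 = Sum.inl 0 <;>
          simp [h1, h2]),
      Finsupp.sum_add_index' (by simp)
        (by intro a b c; by_cases h1 : a.2 = 0 <;> by_cases h2 : a.1 = Sum.inl 0 <;>
          simp [h1, h2]),
      Finsupp.sum_single_index (by simp), Finsupp.sum_single_index (by simp),
      Finsupp.sum_single_index (by simp)] at this
    exact absurd this (by decide)
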